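/- Let B_n be Beta(n,n)-distributed for n ∈ ℕ, n ≥ 1. Then √(8n)(B_n − 1/2) converges in distribution to a standard Gaussian: for every x ∈ ℝ, lim_{n→∞} (1/B(n,n)) ∫_0^{min(max(1/2 + x/√(8n), 0), 1)} y^{n−1}(1−y)^{n−1} dy = (1/√(2π)) ∫_{−∞}^{x} e^{−y²/2} dy. -/

import Mathlib

open Filter MeasureTheory Real

/-- The Beta function `B(a,b) = Γ(a)Γ(b)/Γ(a+b)`. -/
noncomputable def betaFn (a b : ℝ) : ℝ := Real.Gamma a * Real.Gamma b / Real.Gamma (a + b)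

noncomputable def cseq (n : ℕ) : ℝ :=
  (Nat.factorial (2 * n) : ℝ) * Real.sqrt n / ((Nat.factorial n : ℝ) ^ 2 * 4 ^ n * Real.sqrt 2)

noncomputable def hfun (n : ℕ) (u : ℝ) : ℝ := (1 - u ^ 2 / (2 * (n : ℝ))) ^ ((n : ℝ) - 1)

noncomputable def Gfun (n : ℕ) : ℝ → ℝ :=
  (Set.Ioc (-(Real.sqrt (8 * (n : ℝ)) / 2)) (Real.sqrt (8 * (n : ℝ)) / 2)).indicator (hfun n)

noncomputable def fInt (n : ℕ) (y : ℝ) : ℝ := y ^ ((n : ℝ) - 1) * (1 - y) ^ ((n : ℝ) - 1)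

lemma sq_half_sqrt (n : ℕ) : (Real.sqrt (8 * (n : ℝ)) / 2) ^ 2 = 2 * (n : ℝ) := by
  rw [div_pow, Real.sq_sqrt (by positivity)]
  ring



lemma ptwise (u : ℝ) :
    Tendsto (fun n : ℕ => (1 - u ^ 2 / (2 * (n : ℝ))) ^ ((n : ℝ) - 1)) atTop
      (nhds (Real.exp (-(u ^ 2) / 2))) := by
  set t : ℝ := -(u ^ 2) / 2 with ht
  have hb : Tendsto (fun n : ℕ => (1 + t / (n : ℝ))) atTop (nhds 1) := by
    have : Tendsto (fun y : ℝ => 1 + t / y) atTop (nhds 1) := by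
      simpa [div_eq_mul_inv] using ((tendsto_inv_atTop_zero.const_mul t).const_add 1)
    simpa [div_eq_mul_inv, Function.comp_def] using this.comp tendsto_natCast_atTop_atTop
  have hlog : Tendsto (fun n : ℕ => Real.log (1 + t / (n : ℝ))) atTop (nhds 0) := by
    have : ContinuousAt Real.log 1 := Real.continuousAt_log (by norm_num)
    simpa [Function.comp_def] using (this.tendsto.comp hb)
  have hmul : Tendsto (fun n : ℕ => (n : ℝ) * Real.log (1 + t / (n : ℝ))) atTop (nhds t) :=
    (Real.tendsto_mul_log_one_add_div_atTop t).comp tendsto_natCast_atTop_atTop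
  have hexp : Tendsto (fun n : ℕ => ((n : ℝ) - 1) * Real.log (1 + t / (n : ℝ))) atTop (nhds t) := by
    have := hmul.sub hlog
    simp only [sub_zero] at this
    refine this.congr fun n => by ring
  have hfin := (Real.continuous_exp.tendsto t).comp hexp
  have heq : ∀ᶠ n : ℕ in atTop, Real.exp (((n : ℝ) - 1) * Real.log (1 + t / (n : ℝ)))
      = (1 - u ^ 2 / (2 * (n : ℝ))) ^ ((n : ℝ) - 1) := by
    filter_upwards [hb.eventually (eventually_gt_nhds (by norm_num : (0:ℝ) < 1))] with n hn
    have h1 : 1 - u ^ 2 / (2 * (n : ℝ)) = 1 + t / (n : ℝ) := by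
      rw [ht]; ring
    rw [h1, Real.rpow_def_of_pos hn, mul_comm]
  exact Tendsto.congr' heq (by simpa [Function.comp_def] using hfin)

lemma cseq_eq {n : ℕ} (hn : 0 < n) :
    cseq n = Stirling.stirlingSeq (2 * n) / (Stirling.stirlingSeq n ^ 2 * Real.sqrt 2) := by
  have hn' : (0:ℝ) < n := by exact_mod_cast hn
  have hs : (0:ℝ) < Real.sqrt n := Real.sqrt_pos.mpr hn'
  have hP : (0:ℝ) < ((n : ℝ) / Real.exp 1) ^ n := by positivity
  have hB : (0:ℝ) < (Nat.factorial n : ℝ) := by exact_mod_cast Nat.factorial_pos n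
  have h2 : (0:ℝ) < Real.sqrt 2 := by positivity
  rw [Stirling.stirlingSeq, Stirling.stirlingSeq]
  have e1 : ((2 * n : ℕ) : ℝ) = 2 * (n : ℝ) := by push_cast; ring
  rw [e1]
  have e2 : Real.sqrt (2 * (2 * (n:ℝ))) = 2 * Real.sqrt n := by
    rw [show (2 : ℝ) * (2 * n) = 2 ^ 2 * n by ring, Real.sqrt_mul (by positivity),
      Real.sqrt_sq (by norm_num)]
  have e3 : Real.sqrt (2 * (n:ℝ)) = Real.sqrt 2 * Real.sqrt n := Real.sqrt_mul (by norm_num) _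
  have e4 : (2 * (n:ℝ) / Real.exp 1) ^ (2 * n) = 4 ^ n * (((n:ℝ) / Real.exp 1) ^ n) ^ 2 := by
    have h : (2 * (n:ℝ) / Real.exp 1) ^ 2 = 4 * ((n:ℝ) / Real.exp 1) ^ 2 := by ring
    rw [pow_mul, h, mul_pow, ← pow_mul, mul_comm 2 n, pow_mul]
  rw [e2, e3, e4, cseq]
  have hsq : Real.sqrt 2 * Real.sqrt 2 = 2 := Real.mul_self_sqrt (by norm_num)
  have hnsq : Real.sqrt n * Real.sqrt n = n := Real.mul_self_sqrt (le_of_lt hn')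
  have hsq3 : Real.sqrt 2 ^ 3 = 2 * Real.sqrt 2 := by
    rw [pow_succ, pow_two, hsq]
  have hns2 : Real.sqrt (n:ℝ) ^ 2 = (n:ℝ) := by rw [pow_two, hnsq]
  field_simp
  ring_nf
  rw [Real.sq_sqrt (by norm_num : (0:ℝ) ≤ 2)]

lemma cseq_tendsto : Tendsto cseq atTop (nhds (1 / Real.sqrt (2 * π))) := by
  have h2n : Tendsto (fun n : ℕ => 2 * n) atTop atTop :=
    tendsto_atTop_mono (fun n => by simpa using Nat.le_mul_of_pos_left n two_pos) tendsto_id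
  have ha : Tendsto (fun n : ℕ => Stirling.stirlingSeq (2 * n)) atTop (nhds (Real.sqrt π)) :=
    Stirling.tendsto_stirlingSeq_sqrt_pi.comp h2n
  have hb : Tendsto (fun n : ℕ => Stirling.stirlingSeq n ^ 2 * Real.sqrt 2) atTop
      (nhds (π * Real.sqrt 2)) := by
    have := (Stirling.tendsto_stirlingSeq_sqrt_pi.pow 2).mul_const (Real.sqrt 2)
    rwa [Real.sq_sqrt pi_pos.le] at this
  have hne : π * Real.sqrt 2 ≠ 0 := by positivity
  have := ha.div hb hne
  have hval : Real.sqrt π / (π * Real.sqrt 2) = 1 / Real.sqrt (2 * π) := by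
    rw [Real.sqrt_mul (by norm_num), eq_div_iff (by positivity)]
    rw [div_mul_eq_mul_div, div_eq_iff (by positivity)]
    have : Real.sqrt π * Real.sqrt π = π := Real.mul_self_sqrt pi_pos.le
    nlinarith [Real.sqrt_nonneg π, Real.sqrt_nonneg 2]
  rw [← hval]
  refine this.congr' ?_
  filter_upwards [eventually_gt_atTop 0] with n hn
  exact (cseq_eq hn).symm

lemma Gfun_tendsto (x : ℝ) :
    Tendsto (fun n : ℕ => ∫ u in Set.Iic x, Gfun n u) atTop
      (nhds (∫ y in Set.Iic x, Real.exp (-(y ^ 2) / 2))) := by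
  rw [← tendsto_add_atTop_iff_nat 2]
  apply MeasureTheory.tendsto_integral_of_dominated_convergence
    (bound := fun u : ℝ => Real.exp (-(1/4) * u ^ 2))
  · intro n
    apply AEStronglyMeasurable.indicator _ measurableSet_Ioc
    apply Measurable.aestronglyMeasurable
    unfold hfun
    fun_prop
  · exact (integrable_exp_neg_mul_sq (by norm_num : (0:ℝ) < 1/4)).restrict
  · intro n
    refine Eventually.of_forall fun u => ?_
    set m := n + 2
    have hm : (2:ℝ) ≤ (m : ℝ) := by exact_mod_cast (by omega : 2 ≤ m)
    rw [Gfun, Set.indicator_apply]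
    split_ifs with hu
    · obtain ⟨hul, hur⟩ := hu
      have hu2 : u ^ 2 ≤ 2 * (m : ℝ) := by
        rw [← sq_half_sqrt m]
        exact sq_le_sq' (le_of_lt hul) hur
      have h2m : (0:ℝ) < 2 * (m : ℝ) := by linarith
      have hb0 : 0 ≤ 1 - u ^ 2 / (2 * (m : ℝ)) := by
        rw [sub_nonneg, div_le_one h2m]; exact hu2
      have he0 : (0:ℝ) ≤ (m : ℝ) - 1 := by linarith
      have step1 : 1 - u ^ 2 / (2 * (m : ℝ)) ≤ Real.exp (-(u ^ 2 / (2 * (m : ℝ)))) := by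
        have := Real.add_one_le_exp (-(u ^ 2 / (2 * (m : ℝ))))
        linarith
      have step2 : hfun m u ≤ Real.exp (-(u ^ 2 / (2 * (m : ℝ)))) ^ ((m : ℝ) - 1) :=
        Real.rpow_le_rpow hb0 step1 he0
      have step3 : Real.exp (-(u ^ 2 / (2 * (m : ℝ)))) ^ ((m : ℝ) - 1)
          = Real.exp (-(u ^ 2 / (2 * (m : ℝ))) * ((m : ℝ) - 1)) := (Real.exp_mul _ _).symm
      have step4 : -(u ^ 2 / (2 * (m : ℝ))) * ((m : ℝ) - 1) ≤ -(1/4) * u ^ 2 := by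
        have h : (1/4) * u ^ 2 ≤ u ^ 2 / (2 * (m : ℝ)) * ((m : ℝ) - 1) := by
          rw [div_mul_eq_mul_div (u ^ 2) (2 * (m : ℝ)) ((m : ℝ) - 1), le_div_iff₀ h2m]
          nlinarith [sq_nonneg u, mul_nonneg (sq_nonneg u) (by linarith : (0:ℝ) ≤ (m:ℝ) - 2)]
        linarith
      have hle : hfun m u ≤ Real.exp (-(1/4) * u ^ 2) := by
        calc hfun m u ≤ _ := step2
          _ = _ := step3
          _ ≤ _ := Real.exp_le_exp.mpr step4
      have hpos : 0 ≤ hfun m u := Real.rpow_nonneg hb0 _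
      rw [Real.norm_eq_abs, abs_of_nonneg hpos]
      exact hle
    · rw [norm_zero]; positivity
  · refine Eventually.of_forall fun u => ?_
    have base := (ptwise u).comp (tendsto_add_atTop_nat 2)
    refine base.congr' ?_
    filter_upwards [tendsto_natCast_atTop_atTop.eventually_ge_atTop (u ^ 2)] with n hn
    set m := n + 2
    have hmn : (n : ℝ) ≤ (m : ℝ) := by exact_mod_cast (by omega : n ≤ m)
    have hs : (0:ℝ) < Real.sqrt (8 * (m : ℝ)) / 2 := by
      have : (0:ℝ) < 8 * (m:ℝ) := by positivity
      positivity
    have hu2 : u ^ 2 < (Real.sqrt (8 * (m : ℝ)) / 2) ^ 2 := by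
      rw [sq_half_sqrt m]
      have : (0:ℝ) < (m:ℝ) := by positivity
      nlinarith
    have hmem : u ∈ Set.Ioc (-(Real.sqrt (8 * (m : ℝ)) / 2)) (Real.sqrt (8 * (m : ℝ)) / 2) := by
      constructor
      · nlinarith
      · nlinarith
    simp only [Gfun, Set.indicator_of_mem hmem, hfun, Function.comp_apply]
    rfl

set_option maxHeartbeats 1000000 in
theorem statement15 (x : ℝ) :
    Tendsto
      (fun n : ℕ =>
        (1 / betaFn (n : ℝ) (n : ℝ)) *
          ∫ y in (0 : ℝ)..(min (max (1 / 2 + x / Real.sqrt (8 * (n : ℝ))) 0) 1),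
            y ^ ((n : ℝ) - 1) * (1 - y) ^ ((n : ℝ) - 1))
      atTop
      (nhds ((1 / Real.sqrt (2 * π)) * ∫ y in Set.Iic x, Real.exp (-(y ^ 2) / 2))) := by
  have hmain := cseq_tendsto.mul (Gfun_tendsto x)
  refine Tendsto.congr' ?_ hmain
  filter_upwards [eventually_ge_atTop 2,
    tendsto_natCast_atTop_atTop.eventually_ge_atTop (x ^ 2 + 1)] with n hn2 hnx
  set s := Real.sqrt (8 * (n : ℝ)) with hsdef
  have hnpos : (0:ℝ) < (n : ℝ) := by
    have : (2:ℝ) ≤ (n:ℝ) := by exact_mod_cast hn2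
    linarith
  have hs : (0:ℝ) < s := Real.sqrt_pos.mpr (by positivity)
  have hs2 : s ^ 2 = 8 * (n : ℝ) := Real.sq_sqrt (by positivity)
  have hhalf : (s / 2) ^ 2 = 2 * (n : ℝ) := sq_half_sqrt n
  have hx2 : x ^ 2 < (s / 2) ^ 2 := by rw [hhalf]; nlinarith
  have hs4 : (0:ℝ) < s / 2 := by positivity
  have hxu : x < s / 2 := by nlinarith [sq_nonneg (x - s/2), sq_nonneg (x + s/2)]
  have hxl : -(s / 2) < x := by nlinarith [sq_nonneg (x - s/2), sq_nonneg (x + s/2)]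
  have hdiv1 : -(1/2 : ℝ) < x / s := by rw [lt_div_iff₀ hs]; linarith
  have hdiv2 : x / s < 1/2 := by rw [div_lt_iff₀ hs]; linarith
  have ht : min (max (1/2 + x/s) 0) 1 = 1/2 + x/s := by
    rw [max_eq_left (by linarith), min_eq_left (by linarith)]
  -- substitution
  have hb1 : s⁻¹ * -(s/2) + 1/2 = 0 := by field_simp; ring
  have hb2 : s⁻¹ * x + 1/2 = 1/2 + x/s := by rw [inv_mul_eq_div]; ring
  have key := intervalIntegral.integral_comp_mul_add (a := -(s/2)) (b := x) (fInt n)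
    (inv_ne_zero hs.ne') (1/2)
  rw [hb1, hb2, inv_inv] at key
  have hsub : ∫ y in (0:ℝ)..(1/2 + x/s), fInt n y
      = s⁻¹ * ∫ u in (-(s/2))..x, fInt n (s⁻¹ * u + 1/2) := by
    rw [key, smul_eq_mul, ← mul_assoc, inv_mul_cancel₀ hs.ne', one_mul]
  -- integrand rewriting
  have hcong : (∫ u in (-(s/2))..x, fInt n (s⁻¹ * u + 1/2))
      = ∫ u in (-(s/2))..x,
          (1/4 : ℝ) ^ ((n:ℝ) - 1) * (1 - u ^ 2 / (2 * (n:ℝ))) ^ ((n:ℝ) - 1) := by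
    refine intervalIntegral.integral_congr fun u hu => ?_
    rw [Set.uIcc_of_le (by linarith : -(s/2) ≤ x)] at hu
    obtain ⟨hul, hur⟩ := hu
    have hu1 : u ≤ s/2 := le_trans hur hxu.le
    have hds1 : -(1/2 : ℝ) ≤ u / s := by rw [le_div_iff₀ hs]; linarith
    have hds2 : u / s ≤ 1/2 := by rw [div_le_iff₀ hs]; linarith
    have ha : 0 ≤ s⁻¹ * u + 1/2 := by rw [inv_mul_eq_div]; linarith
    have hb : 0 ≤ 1 - (s⁻¹ * u + 1/2) := by rw [inv_mul_eq_div]; linarith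
    have e : u ^ 2 / (2 * (n:ℝ)) = 4 * (u/s) ^ 2 := by
      have hn0 : (n:ℝ) ≠ 0 := hnpos.ne'
      rw [div_pow, hs2]
      field_simp
      ring
    have hz : 0 ≤ 1 - u ^ 2 / (2 * (n:ℝ)) := by
      have hsq : (u/s) ^ 2 ≤ (1/2 : ℝ) ^ 2 := sq_le_sq' (by linarith) hds2
      rw [e]; nlinarith
    have hval : (s⁻¹ * u + 1/2) * (1 - (s⁻¹ * u + 1/2)) = 1/4 * (1 - u ^ 2 / (2 * (n:ℝ))) := by
      rw [e, inv_mul_eq_div]; ring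
    rw [fInt, ← Real.mul_rpow ha hb, hval, Real.mul_rpow (by norm_num) hz]
  have hpull : (∫ u in (-(s/2))..x,
        (1/4 : ℝ) ^ ((n:ℝ) - 1) * (1 - u ^ 2 / (2 * (n:ℝ))) ^ ((n:ℝ) - 1))
      = (1/4 : ℝ) ^ ((n:ℝ) - 1) * ∫ u in (-(s/2))..x, (1 - u ^ 2 / (2 * (n:ℝ))) ^ ((n:ℝ) - 1) :=
    intervalIntegral.integral_const_mul _ _
  have hIcap : Set.Iic x ∩ Set.Ioc (-(s/2)) (s/2) = Set.Ioc (-(s/2)) x := by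
    ext u
    simp only [Set.mem_inter_iff, Set.mem_Iic, Set.mem_Ioc]
    constructor
    · rintro ⟨h1, h2, h3⟩; exact ⟨h2, h1⟩
    · rintro ⟨h1, h2⟩; exact ⟨h2, h1, by linarith⟩
  have hset : (∫ u in (-(s/2))..x, (1 - u ^ 2 / (2 * (n:ℝ))) ^ ((n:ℝ) - 1))
      = ∫ u in Set.Iic x, Gfun n u := by
    rw [intervalIntegral.integral_of_le (by linarith : -(s/2) ≤ x)]
    conv_rhs => rw [Gfun]
    rw [MeasureTheory.setIntegral_indicator measurableSet_Ioc, ← hsdef, hIcap]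
    simp only [hfun]
  -- beta function value
  have hbeta : betaFn (n:ℝ) (n:ℝ)
      = ((Nat.factorial (n-1) : ℝ)) ^ 2 / (Nat.factorial (2*n-1) : ℝ) := by
    rw [betaFn]
    have c1 : ((n:ℝ)) = ((n - 1 : ℕ) : ℝ) + 1 := by
      rw [Nat.cast_sub (by omega)]; push_cast; ring
    have c2 : (n:ℝ) + (n:ℝ) = ((2*n - 1 : ℕ) : ℝ) + 1 := by
      rw [Nat.cast_sub (by omega)]; push_cast; ring
    rw [c2, c1, Real.Gamma_nat_eq_factorial, Real.Gamma_nat_eq_factorial, ← pow_two]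
  -- constant identity
  have hA : (0:ℝ) < (Nat.factorial (n-1) : ℝ) := by exact_mod_cast Nat.factorial_pos _
  have hB : (0:ℝ) < (Nat.factorial (2*n-1) : ℝ) := by exact_mod_cast Nat.factorial_pos _
  have hfact1 : (n : ℝ) * (Nat.factorial (n-1) : ℝ) = (Nat.factorial n : ℝ) := by
    exact_mod_cast congrArg (Nat.cast : ℕ → ℝ) (Nat.mul_factorial_pred (by omega : n ≠ 0))
  have hfact2 : (2 * (n : ℝ)) * (Nat.factorial (2*n-1) : ℝ) = (Nat.factorial (2*n) : ℝ) := by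
    have := congrArg (Nat.cast : ℕ → ℝ) (Nat.mul_factorial_pred (by omega : 2*n ≠ 0))
    push_cast at this ⊢
    linarith
  have hpow4 : (4:ℝ) ^ n = 4 * 4 ^ (n - 1 : ℕ) := by
    rw [← pow_succ']
    congr 1
    omega
  have hseq : s = 2 * Real.sqrt 2 * Real.sqrt (n:ℝ) := by
    rw [hsdef, show (8:ℝ) * (n:ℝ) = (2 * Real.sqrt 2 * Real.sqrt (n:ℝ)) ^ 2 by
      rw [mul_pow, mul_pow, Real.sq_sqrt (by norm_num : (0:ℝ) ≤ 2),
        Real.sq_sqrt hnpos.le]; ring,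
      Real.sqrt_sq (by positivity)]
  have hrpow : (1/4 : ℝ) ^ ((n:ℝ) - 1) = (1/4 : ℝ) ^ (n - 1 : ℕ) := by
    rw [show ((n:ℝ) - 1) = ((n - 1 : ℕ) : ℝ) by rw [Nat.cast_sub (by omega)]; push_cast; ring,
      Real.rpow_natCast]
  have hsq : Real.sqrt 2 * Real.sqrt 2 = 2 := Real.mul_self_sqrt (by norm_num)
  have hnsq : Real.sqrt (n:ℝ) * Real.sqrt (n:ℝ) = (n:ℝ) := Real.mul_self_sqrt hnpos.le
  have hconst : (1 / betaFn (n:ℝ) (n:ℝ)) * (s⁻¹ * (1/4 : ℝ) ^ ((n:ℝ) - 1)) = cseq n := by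
    rw [hbeta, hrpow, cseq, ← hfact1, ← hfact2, hpow4, hseq]
    have h4 : (0:ℝ) < (4:ℝ) ^ (n - 1 : ℕ) := by positivity
    have hsn : (0:ℝ) < Real.sqrt (n:ℝ) := Real.sqrt_pos.mpr hnpos
    have hs2' : (0:ℝ) < Real.sqrt 2 := by positivity
    field_simp [hA.ne', hB.ne', h4.ne', hsn.ne', hs2'.ne', hnpos.ne']
    ring_nf
    rw [show Real.sqrt (n:ℝ) ^ 2 = (n:ℝ) by rw [pow_two, hnsq]]
    rw [mul_assoc (n:ℝ), ← mul_pow]; norm_num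
  -- assemble
  show cseq n * _ = _
  rw [ht]
  have hff : (∫ y in (0:ℝ)..(1/2 + x/s), y ^ ((n:ℝ) - 1) * (1 - y) ^ ((n:ℝ) - 1))
      = ∫ y in (0:ℝ)..(1/2 + x/s), fInt n y := rfl
  rw [hff, hsub, hcong, hpull, hset, ← hconst]
  ring
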